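/- Let (Ω, μ) be a finite measure space, let g : Ω → ℝ^{2×2} be measurable with g(x) symmetric positive definite and |g(x)^{-1}| ≤ C for μ-a.e. x (for some constant C ≥ 0). Let F and F_n (n ∈ ℕ) be matrix fields Ω → ℝ^{3×2} with ∫_Ω |F|⁴ dμ < ∞, ∫_Ω |F_n|⁴ dμ < ∞ for all n, and ∫_Ω |F_n − F|⁴ dμ → 0 as n → ∞. Then ∫_Ω |g^{-1/2} (FᵀF − g) g^{-1/2}|² dμ ≤ liminf_{n→∞} ∫_Ω |g^{-1/2} (F_nᵀF_n − g) g^{-1/2}|² dμ, and likewise ∫_Ω tr( g^{-1/2} (FᵀF − g) g^{-1/2} )² dμ ≤ liminf_{n→∞} ∫_Ω tr( g^{-1/2} (F_nᵀF_n − g) g^{-1/2} )² dμ. (This is the lower-semicontinuity of the stretching integrands, inequalities (4.7)–(4.8) in the proof of the lim-inf Theorem 4.2, with F_n = ∇ȳ_h and F = ∇ȳ.) -/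

import Mathlib

open MeasureTheory Matrix Filter Topology Finset

/-- Frobenius norm of a real matrix. -/
noncomputable def frob {m n : Type*} [Fintype m] [Fintype n] (A : Matrix m n ℝ) : ℝ :=
  Real.sqrt (∑ i, ∑ j, (A i j) ^ 2)

section FrobLemmas

attribute [local instance] Matrix.frobeniusSeminormedAddCommGroup

lemma frob_eq_norm {m n : Type*} [Fintype m] [Fintype n] (A : Matrix m n ℝ) : frob A = ‖A‖ := by
  rw [frob, Matrix.frobenius_norm_def, Real.sqrt_eq_rpow]
  congr 1
  refine Finset.sum_congr rfl fun i _ => Finset.sum_congr rfl fun j _ => ?_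
  rw [Real.rpow_two, Real.norm_eq_abs, sq_abs]

lemma frob_nonneg {m n : Type*} [Fintype m] [Fintype n] (A : Matrix m n ℝ) : 0 ≤ frob A :=
  Real.sqrt_nonneg _

lemma frob_sq {m n : Type*} [Fintype m] [Fintype n] (A : Matrix m n ℝ) :
    frob A ^ 2 = ∑ i, ∑ j, (A i j) ^ 2 :=
  Real.sq_sqrt (Finset.sum_nonneg fun _ _ => Finset.sum_nonneg fun _ _ => sq_nonneg _)

lemma abs_entry_le_frob {m n : Type*} [Fintype m] [Fintype n] (A : Matrix m n ℝ) (i : m) (j : n) :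
    |A i j| ≤ frob A := by
  rw [← Real.sqrt_sq_eq_abs]
  apply Real.sqrt_le_sqrt
  calc (A i j) ^ 2 ≤ ∑ j', (A i j') ^ 2 :=
        Finset.single_le_sum (f := fun j' => (A i j') ^ 2) (fun j' _ => sq_nonneg _)
          (Finset.mem_univ j)
    _ ≤ ∑ i', ∑ j', (A i' j') ^ 2 :=
        Finset.single_le_sum (f := fun i' => ∑ j', (A i' j') ^ 2)
          (fun i' _ => Finset.sum_nonneg fun j' _ => sq_nonneg _) (Finset.mem_univ i)

lemma frob_mul_le {l m n : Type*} [Fintype l] [Fintype m] [Fintype n]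
    (A : Matrix l m ℝ) (B : Matrix m n ℝ) : frob (A * B) ≤ frob A * frob B := by
  simp only [frob_eq_norm]; exact Matrix.frobenius_norm_mul A B

lemma frob_add_le {m n : Type*} [Fintype m] [Fintype n] (A B : Matrix m n ℝ) :
    frob (A + B) ≤ frob A + frob B := by
  simp only [frob_eq_norm]; exact norm_add_le A B

lemma frob_sub_le {m n : Type*} [Fintype m] [Fintype n] (A B : Matrix m n ℝ) :
    frob (A - B) ≤ frob A + frob B := by
  simp only [frob_eq_norm]; exact norm_sub_le A B

lemma frob_sub_frob_le {m n : Type*} [Fintype m] [Fintype n] (A B : Matrix m n ℝ) :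
    |frob A - frob B| ≤ frob (A - B) := by
  simp only [frob_eq_norm]; exact abs_norm_sub_norm_le A B

lemma frob_transpose {m n : Type*} [Fintype m] [Fintype n] (A : Matrix m n ℝ) :
    frob Aᵀ = frob A := by
  simp only [frob_eq_norm]; exact Matrix.frobenius_norm_transpose A

end FrobLemmas

lemma frob_one_le_two : frob (1 : Matrix (Fin 2) (Fin 2) ℝ) ≤ 2 := by
  have h : frob (1 : Matrix (Fin 2) (Fin 2) ℝ) = Real.sqrt 2 := by
    rw [frob]
    norm_num [Fin.sum_univ_two, Matrix.one_apply]
  rw [h]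
  nlinarith [Real.sq_sqrt (by norm_num : (2:ℝ) ≥ 0), Real.sqrt_nonneg 2]

lemma trace_sq_le {A : Matrix (Fin 2) (Fin 2) ℝ} : (Matrix.trace A) ^ 2 ≤ 2 * frob A ^ 2 := by
  rw [frob_sq, Matrix.trace_fin_two]
  simp [Fin.sum_univ_two]
  nlinarith [sq_nonneg (A 0 0 - A 1 1), sq_nonneg (A 0 1), sq_nonneg (A 1 0)]

lemma frob_conj_le {G A : Matrix (Fin 2) (Fin 2) ℝ} {c : ℝ}
    (hG : frob G * frob G ≤ c) : frob (G * A * G) ≤ c * frob A := by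
  calc frob (G * A * G) ≤ frob (G * A) * frob G := frob_mul_le _ _
    _ ≤ frob G * frob A * frob G :=
        mul_le_mul_of_nonneg_right (frob_mul_le _ _) (frob_nonneg _)
    _ = (frob G * frob G) * frob A := by ring
    _ ≤ c * frob A := mul_le_mul_of_nonneg_right hG (frob_nonneg _)

lemma frob_gram_le (H : Matrix (Fin 3) (Fin 2) ℝ) : frob (Hᵀ * H) ≤ frob H ^ 2 := by
  calc frob (Hᵀ * H) ≤ frob Hᵀ * frob H := frob_mul_le _ _
    _ = frob H ^ 2 := by rw [frob_transpose]; ring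

lemma pow4_add_le {a b : ℝ} (ha : 0 ≤ a) (hb : 0 ≤ b) :
    (a + b) ^ 4 ≤ 8 * a ^ 4 + 8 * b ^ 4 := by
  nlinarith [sq_nonneg (a - b), sq_nonneg (a + b), sq_nonneg (a ^ 2 - b ^ 2),
    sq_nonneg (a ^ 2 + b ^ 2), mul_nonneg ha hb, sq_nonneg (a * b)]

/-- Explicit square root of a 2×2 SPD matrix. -/
noncomputable def msqrt (A : Matrix (Fin 2) (Fin 2) ℝ) : Matrix (Fin 2) (Fin 2) ℝ :=
  (Real.sqrt (Matrix.trace A + 2 * Real.sqrt A.det))⁻¹ •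
    (A + Real.sqrt A.det • (1 : Matrix (Fin 2) (Fin 2) ℝ))

lemma PosDef.diag_pos' {S : Matrix (Fin 2) (Fin 2) ℝ} (hS : S.PosDef) (i : Fin 2) :
    0 < S i i := by
  exact hS.diag_pos

lemma msqrt_sq {S : Matrix (Fin 2) (Fin 2) ℝ} (hS : S.PosDef) : msqrt (S * S) = S := by
  have hdet : 0 < S.det := hS.det_pos
  have h00 : 0 < S 0 0 := PosDef.diag_pos' hS 0
  have h11 : 0 < S 1 1 := PosDef.diag_pos' hS 1
  have ht : 0 < Matrix.trace S := by rw [Matrix.trace_fin_two]; positivity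
  have hdet2 : (S * S).det = S.det ^ 2 := by rw [Matrix.det_mul]; ring
  have hsdet : Real.sqrt ((S * S).det) = S.det := by
    rw [hdet2, Real.sqrt_sq hdet.le]
  have htr : Matrix.trace (S * S) + 2 * Real.sqrt ((S * S).det) = (Matrix.trace S) ^ 2 := by
    rw [hsdet, Matrix.trace_fin_two, Matrix.trace_fin_two]
    simp [Matrix.mul_apply, Fin.sum_univ_two, Matrix.det_fin_two]
    ring
  have hst : Real.sqrt (Matrix.trace (S * S) + 2 * Real.sqrt ((S * S).det)) = Matrix.trace S := by
    rw [htr, Real.sqrt_sq ht.le]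
  have hch : S * S + S.det • (1 : Matrix (Fin 2) (Fin 2) ℝ) = (Matrix.trace S) • S := by
    ext i j
    fin_cases i <;> fin_cases j <;>
      simp [Matrix.mul_apply, Fin.sum_univ_two, Matrix.det_fin_two, Matrix.trace_fin_two,
        Matrix.one_apply] <;> ring
  rw [msqrt, hst, hsdet, hch, smul_smul, inv_mul_cancel₀ ht.ne', one_smul]

lemma pointwise_pack {g S : Matrix (Fin 2) (Fin 2) ℝ} {C : ℝ}
    (hg : g.PosDef) (hgC : frob g⁻¹ ≤ C) (hS : S.PosDef) (hSS : S * S = g⁻¹) :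
    frob S * frob S ≤ 2 * C ∧
      ∀ H : Matrix (Fin 3) (Fin 2) ℝ, S * (Hᵀ * H - g) * S = S * (Hᵀ * H) * S - 1 := by
  have h1 : S * S * g = 1 := by
    rw [hSS]; exact Matrix.nonsing_inv_mul g hg.det_pos.ne'.isUnit
  have h2 : S * (S * g) = 1 := by rw [← Matrix.mul_assoc]; exact h1
  have hinv : S⁻¹ = S * g := Matrix.inv_eq_right_inv h2
  have hSgS : S * g * S = 1 := by
    rw [show S * g = S⁻¹ from hinv.symm]
    exact Matrix.nonsing_inv_mul S hS.det_pos.ne'.isUnit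
  constructor
  · have hherm : S 1 0 = S 0 1 := by
      have := hS.1.apply 0 1
      simpa using this
    have e00 : (S * S) 0 0 = g⁻¹ 0 0 := by rw [hSS]
    have e11 : (S * S) 1 1 = g⁻¹ 1 1 := by rw [hSS]
    have hfs : frob S ^ 2 = g⁻¹ 0 0 + g⁻¹ 1 1 := by
      rw [frob_sq, ← e00, ← e11]
      simp only [Matrix.mul_apply, Fin.sum_univ_two]
      rw [hherm]; ring
    have b1 : g⁻¹ 0 0 ≤ C := le_trans (le_abs_self _) (le_trans (abs_entry_le_frob _ 0 0) hgC)
    have b2 : g⁻¹ 1 1 ≤ C := le_trans (le_abs_self _) (le_trans (abs_entry_le_frob _ 1 1) hgC)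
    calc frob S * frob S = frob S ^ 2 := (sq (frob S)).symm
      _ = g⁻¹ 0 0 + g⁻¹ 1 1 := hfs
      _ ≤ 2 * C := by linarith
  · intro H
    rw [Matrix.mul_sub, Matrix.sub_mul, hSgS]

lemma abs_integral_le_integral_abs' {Ω : Type*} [MeasurableSpace Ω] {μ : Measure Ω}
    {f : Ω → ℝ} : |∫ x, f x ∂μ| ≤ ∫ x, |f x| ∂μ := by
  simpa [Real.norm_eq_abs] using MeasureTheory.norm_integral_le_integral_norm (μ := μ) f

lemma sqrt_half_pow (y : ℝ) : y ^ ((1:ℝ)/2) = Real.sqrt y := (Real.sqrt_eq_rpow y).symm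

lemma entry_mul_meas {Ω : Type*} [MeasurableSpace Ω] {l m n : Type*}
    [Fintype l] [Fintype m] [Fintype n]
    {A : Ω → Matrix l m ℝ} {B : Ω → Matrix m n ℝ}
    (hA : ∀ i j, Measurable fun x => A x i j) (hB : ∀ i j, Measurable fun x => B x i j) :
    ∀ i j, Measurable fun x => (A x * B x) i j := by
  intro i j
  simp only [Matrix.mul_apply]
  exact Finset.measurable_sum _ fun k _ => (hA i k).mul (hB k j)

lemma frob_measurable {Ω : Type*} [MeasurableSpace Ω] {m n : Type*} [Fintype m] [Fintype n]
    (M : Ω → Matrix m n ℝ) (h : ∀ i j, Measurable fun x => M x i j) :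
    Measurable fun x => frob (M x) := by
  unfold frob
  exact Real.continuous_sqrt.measurable.comp
    (Finset.measurable_sum _ fun i _ => Finset.measurable_sum _ fun j _ => (h i j).pow_const 2)

lemma key {Ω : Type*} [MeasurableSpace Ω] (μ : Measure Ω) (φ : Ω → ℝ) (ψ : ℕ → Ω → ℝ)
    (hφ : MemLp φ 2 μ) (hψ : ∀ n, MemLp (ψ n) 2 μ)
    (hd : Tendsto (fun n => ∫ x, (ψ n x - φ x) ^ 2 ∂μ) atTop (𝓝 0)) :
    Tendsto (fun n => ∫ x, (ψ n x) ^ 2 ∂μ) atTop (𝓝 (∫ x, φ x ^ 2 ∂μ)) := by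
  set a : ℝ := ∫ x, φ x ^ 2 ∂μ with ha_def
  set d : ℕ → ℝ := fun n => ∫ x, (ψ n x - φ x) ^ 2 ∂μ with hd_def
  set A : ℕ → ℝ := fun n => ∫ x, (ψ n x) ^ 2 ∂μ with hA_def
  have ha0 : 0 ≤ a := integral_nonneg fun x => sq_nonneg _
  have hd0 : ∀ n, 0 ≤ d n := fun n => integral_nonneg fun x => sq_nonneg _
  have hφsq : Integrable (fun x => φ x ^ 2) μ := hφ.integrable_sq
  have hψsq : ∀ n, Integrable (fun x => ψ n x ^ 2) μ := fun n => (hψ n).integrable_sq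
  have hsubsq : ∀ n, Integrable (fun x => (ψ n x - φ x) ^ 2) μ :=
    fun n => ((hψ n).sub hφ).integrable_sq
  have hlea : ∀ n, A n ≤ 2 * d n + 2 * a := by
    intro n
    have h1 : A n ≤ ∫ x, (2 * (ψ n x - φ x) ^ 2 + 2 * φ x ^ 2) ∂μ := by
      refine integral_mono (hψsq n) (((hsubsq n).const_mul 2).add (hφsq.const_mul 2)) ?_
      intro x
      dsimp only
      nlinarith [sq_nonneg (ψ n x - 2 * φ x)]
    calc A n ≤ ∫ x, (2 * (ψ n x - φ x) ^ 2 + 2 * φ x ^ 2) ∂μ := h1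
      _ = 2 * d n + 2 * a := by
          rw [integral_add ((hsubsq n).const_mul 2) (hφsq.const_mul 2),
            integral_const_mul, integral_const_mul]
  have haddsq : ∀ n, ∫ x, (ψ n x + φ x) ^ 2 ∂μ ≤ 2 * A n + 2 * a := by
    intro n
    have h1 : ∫ x, (ψ n x + φ x) ^ 2 ∂μ ≤ ∫ x, (2 * (ψ n x) ^ 2 + 2 * φ x ^ 2) ∂μ := by
      refine integral_mono ((hψ n).add hφ).integrable_sq
        (((hψsq n).const_mul 2).add (hφsq.const_mul 2)) ?_
      intro x
      dsimp only
      nlinarith [sq_nonneg (ψ n x - φ x)]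
    calc ∫ x, (ψ n x + φ x) ^ 2 ∂μ ≤ ∫ x, (2 * (ψ n x) ^ 2 + 2 * φ x ^ 2) ∂μ := h1
      _ = 2 * A n + 2 * a := by
          rw [integral_add ((hψsq n).const_mul 2) (hφsq.const_mul 2),
            integral_const_mul, integral_const_mul]
  have hkey : ∀ n, |A n - a| ≤ Real.sqrt (d n) * Real.sqrt (4 * d n + 6 * a) := by
    intro n
    have hconj : Real.HolderConjugate 2 2 := Real.HolderConjugate.two_two
    have hm1 : MemLp (fun x => |ψ n x - φ x|) (ENNReal.ofReal 2) μ := by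
      have := ((hψ n).sub hφ).abs
      rw [ENNReal.ofReal_ofNat]; exact this
    have hm2 : MemLp (fun x => |ψ n x + φ x|) (ENNReal.ofReal 2) μ := by
      have := ((hψ n).add hφ).abs
      rw [ENNReal.ofReal_ofNat]; exact this
    have holder := integral_mul_le_Lp_mul_Lq_of_nonneg hconj
      (f := fun x => |ψ n x - φ x|) (g := fun x => |ψ n x + φ x|)
      (Eventually.of_forall fun x => abs_nonneg _)
      (Eventually.of_forall fun x => abs_nonneg _) hm1 hm2
    have e1 : ∫ x, |ψ n x - φ x| ^ (2:ℝ) ∂μ = d n := by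
      refine integral_congr_ae (Eventually.of_forall fun x => ?_)
      simp [Real.rpow_two, sq_abs]
    have e2 : ∫ x, |ψ n x + φ x| ^ (2:ℝ) ∂μ = ∫ x, (ψ n x + φ x) ^ 2 ∂μ := by
      refine integral_congr_ae (Eventually.of_forall fun x => ?_)
      simp [Real.rpow_two, sq_abs]
    rw [e1, e2, sqrt_half_pow, sqrt_half_pow] at holder
    have hdiff : A n - a = ∫ x, (ψ n x ^ 2 - φ x ^ 2) ∂μ := (integral_sub (hψsq n) hφsq).symm
    have habs : |A n - a| ≤ ∫ x, |ψ n x - φ x| * |ψ n x + φ x| ∂μ := by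
      rw [hdiff]
      calc |∫ x, (ψ n x ^ 2 - φ x ^ 2) ∂μ| ≤ ∫ x, |ψ n x ^ 2 - φ x ^ 2| ∂μ :=
            abs_integral_le_integral_abs'
        _ = ∫ x, |ψ n x - φ x| * |ψ n x + φ x| ∂μ := by
            refine integral_congr_ae (Eventually.of_forall fun x => ?_)
            dsimp only
            rw [← abs_mul]
            congr 1
            ring
    have hmono : Real.sqrt (∫ x, (ψ n x + φ x) ^ 2 ∂μ) ≤ Real.sqrt (4 * d n + 6 * a) := by
      apply Real.sqrt_le_sqrt
      calc ∫ x, (ψ n x + φ x) ^ 2 ∂μ ≤ 2 * A n + 2 * a := haddsq n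
        _ ≤ 2 * (2 * d n + 2 * a) + 2 * a := by linarith [hlea n]
        _ = 4 * d n + 6 * a := by ring
    calc |A n - a| ≤ ∫ x, |ψ n x - φ x| * |ψ n x + φ x| ∂μ := habs
      _ ≤ Real.sqrt (d n) * Real.sqrt (∫ x, (ψ n x + φ x) ^ 2 ∂μ) := holder
      _ ≤ Real.sqrt (d n) * Real.sqrt (4 * d n + 6 * a) :=
          mul_le_mul_of_nonneg_left hmono (Real.sqrt_nonneg _)
  have hbound : Tendsto (fun n => Real.sqrt (d n) * Real.sqrt (4 * d n + 6 * a)) atTop (𝓝 0) := by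
    have h1 : Tendsto (fun n => Real.sqrt (d n)) atTop (𝓝 0) := by
      have := (Real.continuous_sqrt.tendsto 0).comp hd
      simpa [Function.comp_def] using this
    have h2 : Tendsto (fun n => Real.sqrt (4 * d n + 6 * a)) atTop (𝓝 (Real.sqrt (6 * a))) := by
      have h3 : Tendsto (fun n => 4 * d n + 6 * a) atTop (𝓝 (6 * a)) := by
        have := (hd.const_mul 4).add_const (6 * a)
        simpa using this
      exact (Real.continuous_sqrt.tendsto _).comp h3
    have := h1.mul h2
    simpa using this
  have habs0 : Tendsto (fun n => |A n - a|) atTop (𝓝 0) :=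
    squeeze_zero (fun n => abs_nonneg _) hkey hbound
  have h4 : Tendsto (fun n => A n - a) atTop (𝓝 0) :=
    (tendsto_zero_iff_abs_tendsto_zero _).mpr habs0
  have := h4.add_const a
  simpa using this

set_option maxHeartbeats 1000000 in
/-- lower semicontinuity of the stretching integrands under L⁴ convergence
of the gradients (inequalities (4.7)–(4.8) of the lim-inf Theorem 4.2). Here
`ginvSqrt x` plays the role of `g(x)^{-1/2}`: it is (a.e.) the unique symmetric positive
definite matrix whose square is `g(x)⁻¹`. -/
theorem stmt1
    {Ω : Type*} [MeasurableSpace Ω] (μ : Measure Ω) [IsFiniteMeasure μ]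
    (g : Ω → Matrix (Fin 2) (Fin 2) ℝ)
    (hgmeas : ∀ i j, Measurable fun x => g x i j)
    (C : ℝ) (hC : 0 ≤ C)
    (hgpd : ∀ᵐ x ∂μ, (g x).PosDef ∧ frob ((g x)⁻¹) ≤ C)
    (ginvSqrt : Ω → Matrix (Fin 2) (Fin 2) ℝ)
    (hginvSqrt : ∀ᵐ x ∂μ, (ginvSqrt x).PosDef ∧ ginvSqrt x * ginvSqrt x = (g x)⁻¹)
    (F : Ω → Matrix (Fin 3) (Fin 2) ℝ)
    (Fn : ℕ → Ω → Matrix (Fin 3) (Fin 2) ℝ)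
    (hFmeas : ∀ i j, Measurable fun x => F x i j)
    (hFnmeas : ∀ n i j, Measurable fun x => Fn n x i j)
    (hF4 : Integrable (fun x => frob (F x) ^ 4) μ)
    (hFn4 : ∀ n, Integrable (fun x => frob (Fn n x) ^ 4) μ)
    (hconv : Tendsto (fun n => ∫ x, frob (Fn n x - F x) ^ 4 ∂μ) atTop (𝓝 0)) :
    (∫ x, frob (ginvSqrt x * ((F x)ᵀ * F x - g x) * ginvSqrt x) ^ 2 ∂μ ≤
        liminf (fun n =>
          ∫ x, frob (ginvSqrt x * ((Fn n x)ᵀ * Fn n x - g x) * ginvSqrt x) ^ 2 ∂μ) atTop) ∧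
    (∫ x, (trace (ginvSqrt x * ((F x)ᵀ * F x - g x) * ginvSqrt x)) ^ 2 ∂μ ≤
        liminf (fun n =>
          ∫ x, (trace (ginvSqrt x * ((Fn n x)ᵀ * Fn n x - g x) * ginvSqrt x)) ^ 2 ∂μ) atTop) := by
  classical
  -- measurable representative of `ginvSqrt`
  set G : Ω → Matrix (Fin 2) (Fin 2) ℝ := fun x => msqrt ((g x)⁻¹) with hG_def
  have hdetg : Measurable fun x => (g x).det := by
    simp only [Matrix.det_fin_two]
    exact ((hgmeas 0 0).mul (hgmeas 1 1)).sub ((hgmeas 0 1).mul (hgmeas 1 0))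
  have hginvmeas : ∀ i j, Measurable fun x => (g x)⁻¹ i j := by
    intro i j
    have hrepr : ∀ x, (g x)⁻¹ i j = ((g x).det)⁻¹ * (g x).adjugate i j := by
      intro x; rw [Matrix.inv_def]; simp [Ring.inverse_eq_inv']
    simp only [hrepr]
    refine (hdetg.inv).mul ?_
    fin_cases i <;> fin_cases j <;>
      simp only [Matrix.adjugate_fin_two, Matrix.cons_val', Matrix.cons_val_zero,
        Matrix.cons_val_one, Matrix.head_cons, Matrix.empty_val', Matrix.cons_val_fin_one,
        Matrix.head_fin_const] <;>
      first
        | exact hgmeas 1 1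
        | exact (hgmeas 0 1).neg
        | exact (hgmeas 1 0).neg
        | exact hgmeas 0 0
  have hdetinv : Measurable fun x => ((g x)⁻¹).det := by
    simp only [Matrix.det_fin_two]
    exact ((hginvmeas 0 0).mul (hginvmeas 1 1)).sub ((hginvmeas 0 1).mul (hginvmeas 1 0))
  have htrinv : Measurable fun x => Matrix.trace ((g x)⁻¹) := by
    simp only [Matrix.trace_fin_two]
    exact (hginvmeas 0 0).add (hginvmeas 1 1)
  have hGmeas : ∀ i j, Measurable fun x => G x i j := by
    intro i j
    have hre : (fun x => G x i j) = fun x =>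
        (Real.sqrt (Matrix.trace ((g x)⁻¹) + 2 * Real.sqrt ((g x)⁻¹).det))⁻¹ *
          ((g x)⁻¹ i j + Real.sqrt ((g x)⁻¹).det * (1 : Matrix (Fin 2) (Fin 2) ℝ) i j) := by
      funext x
      simp [hG_def, msqrt, Matrix.smul_apply, Matrix.add_apply]
      ring
    rw [hre]
    have hsd : Measurable fun x => Real.sqrt ((g x)⁻¹).det :=
      Real.continuous_sqrt.measurable.comp hdetinv
    exact ((Real.continuous_sqrt.measurable.comp (htrinv.add (hsd.const_mul 2))).inv).mul
      ((hginvmeas i j).add (hsd.mul_const _))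
  have hGae : ∀ᵐ x ∂μ, G x = ginvSqrt x := by
    filter_upwards [hginvSqrt] with x hx
    rw [hG_def]
    dsimp only
    rw [← hx.2, msqrt_sq hx.1]
  have hpack : ∀ᵐ x ∂μ, frob (G x) * frob (G x) ≤ 2 * C ∧
      ∀ H : Matrix (Fin 3) (Fin 2) ℝ,
        ginvSqrt x * (Hᵀ * H - g x) * ginvSqrt x = G x * (Hᵀ * H) * G x - 1 := by
    filter_upwards [hgpd, hginvSqrt, hGae] with x hg hS hGx
    have h := pointwise_pack hg.1 hg.2 hS.1 hS.2
    rw [hGx]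
    exact h
  -- the scalar fields
  set φ : Ω → ℝ := fun x => frob (G x * ((F x)ᵀ * F x) * G x - 1) with hφ_def
  set ψ : ℕ → Ω → ℝ := fun n x => frob (G x * ((Fn n x)ᵀ * Fn n x) * G x - 1) with hψ_def
  set τ : Ω → ℝ := fun x => Matrix.trace (G x * ((F x)ᵀ * F x) * G x - 1) with hτ_def
  set τs : ℕ → Ω → ℝ := fun n x => Matrix.trace (G x * ((Fn n x)ᵀ * Fn n x) * G x - 1)
    with hτs_def
  set w : ℕ → Ω → ℝ := fun n x => (frob (Fn n x) + frob (F x)) * frob (Fn n x - F x) with hw_def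
  -- measurability
  have hMF : ∀ (i j : Fin 2), Measurable fun x => (G x * ((F x)ᵀ * F x) * G x - 1 : Matrix (Fin 2) (Fin 2) ℝ) i j := by
    intro i j
    have h1 : ∀ i j, Measurable fun x => ((F x)ᵀ * F x) i j :=
      entry_mul_meas (fun i j => hFmeas j i) hFmeas
    have h2 := entry_mul_meas (entry_mul_meas hGmeas h1) hGmeas
    exact (h2 i j).sub (measurable_const (a := (1 : Matrix (Fin 2) (Fin 2) ℝ) i j))
  have hMFn : ∀ (n : ℕ) (i j : Fin 2), Measurable fun x => (G x * ((Fn n x)ᵀ * Fn n x) * G x - 1 : Matrix (Fin 2) (Fin 2) ℝ) i j := by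
    intro n i j
    have h1 : ∀ i j, Measurable fun x => ((Fn n x)ᵀ * Fn n x) i j :=
      entry_mul_meas (fun i j => hFnmeas n j i) (hFnmeas n)
    have h2 := entry_mul_meas (entry_mul_meas hGmeas h1) hGmeas
    exact (h2 i j).sub (measurable_const (a := (1 : Matrix (Fin 2) (Fin 2) ℝ) i j))
  have hφmeas : Measurable φ := frob_measurable _ hMF
  have hψmeas : ∀ n, Measurable (ψ n) := fun n => frob_measurable _ (hMFn n)
  have hτmeas : Measurable τ := by
    rw [hτ_def]
    simp only [Matrix.trace_fin_two]
    exact (hMF 0 0).add (hMF 1 1)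
  have hτsmeas : ∀ n, Measurable (τs n) := by
    intro n
    rw [hτs_def]
    simp only [Matrix.trace_fin_two]
    exact (hMFn n 0 0).add (hMFn n 1 1)
  have hsubmeas : ∀ n, Measurable fun x => frob (Fn n x - F x) := by
    intro n
    exact frob_measurable _ (fun i j => ((hFnmeas n i j).sub (hFmeas i j)))
  have hFnormmeas : Measurable fun x => frob (F x) := frob_measurable _ hFmeas
  have hFnnormmeas : ∀ n, Measurable fun x => frob (Fn n x) :=
    fun n => frob_measurable _ (hFnmeas n)
  have hwmeas : ∀ n, Measurable (w n) :=
    fun n => ((hFnnormmeas n).add hFnormmeas).mul (hsubmeas n)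
  -- pointwise a.e. bounds for φ, ψ
  have hφb : ∀ᵐ x ∂μ, φ x ≤ 2 * C * frob (F x) ^ 2 + 2 := by
    filter_upwards [hpack] with x hx
    calc φ x ≤ frob (G x * ((F x)ᵀ * F x) * G x) + frob (1 : Matrix (Fin 2) (Fin 2) ℝ) :=
          frob_sub_le _ _
      _ ≤ 2 * C * frob ((F x)ᵀ * F x) + 2 :=
          add_le_add (frob_conj_le hx.1) frob_one_le_two
      _ ≤ 2 * C * frob (F x) ^ 2 + 2 := by
          have := frob_gram_le (F x)
          nlinarith [frob_nonneg ((F x)ᵀ * F x), hC]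
  have hψb : ∀ n, ∀ᵐ x ∂μ, ψ n x ≤ 2 * C * frob (Fn n x) ^ 2 + 2 := by
    intro n
    filter_upwards [hpack] with x hx
    calc ψ n x ≤ frob (G x * ((Fn n x)ᵀ * Fn n x) * G x) + frob (1 : Matrix (Fin 2) (Fin 2) ℝ) :=
          frob_sub_le _ _
      _ ≤ 2 * C * frob ((Fn n x)ᵀ * Fn n x) + 2 :=
          add_le_add (frob_conj_le hx.1) frob_one_le_two
      _ ≤ 2 * C * frob (Fn n x) ^ 2 + 2 := by
          have := frob_gram_le (Fn n x)
          nlinarith [frob_nonneg ((Fn n x)ᵀ * Fn n x), hC]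
  -- integrability of the squares
  have hφ2int : Integrable (fun x => φ x ^ 2) μ := by
    refine Integrable.mono' ((hF4.const_mul (8 * C ^ 2)).add (integrable_const 8))
      ((hφmeas.pow_const 2).aestronglyMeasurable) ?_
    filter_upwards [hφb] with x hx
    rw [Real.norm_eq_abs, abs_of_nonneg (sq_nonneg _)]; try simp only [Pi.add_apply]
    have h0 : 0 ≤ φ x := frob_nonneg _
    nlinarith [sq_nonneg (2 * C * frob (F x) ^ 2 - 2), sq_nonneg (frob (F x)),
      mul_nonneg hC (sq_nonneg (frob (F x)))]
  have hψ2int : ∀ n, Integrable (fun x => ψ n x ^ 2) μ := by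
    intro n
    refine Integrable.mono' (((hFn4 n).const_mul (8 * C ^ 2)).add (integrable_const 8))
      (((hψmeas n).pow_const 2).aestronglyMeasurable) ?_
    filter_upwards [hψb n] with x hx
    rw [Real.norm_eq_abs, abs_of_nonneg (sq_nonneg _)]; try simp only [Pi.add_apply]
    have h0 : 0 ≤ ψ n x := frob_nonneg _
    nlinarith [sq_nonneg (2 * C * frob (Fn n x) ^ 2 - 2), sq_nonneg (frob (Fn n x)),
      mul_nonneg hC (sq_nonneg (frob (Fn n x)))]
  have hτ2int : Integrable (fun x => τ x ^ 2) μ := by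
    refine Integrable.mono' (hφ2int.const_mul 2) ((hτmeas.pow_const 2).aestronglyMeasurable) ?_
    refine Eventually.of_forall fun x => ?_
    rw [Real.norm_eq_abs, abs_of_nonneg (sq_nonneg _)]; try simp only [Pi.add_apply]
    have := trace_sq_le (A := G x * ((F x)ᵀ * F x) * G x - 1)
    simpa [hτ_def, hφ_def] using this
  have hτs2int : ∀ n, Integrable (fun x => τs n x ^ 2) μ := by
    intro n
    refine Integrable.mono' ((hψ2int n).const_mul 2)
      (((hτsmeas n).pow_const 2).aestronglyMeasurable) ?_
    refine Eventually.of_forall fun x => ?_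
    rw [Real.norm_eq_abs, abs_of_nonneg (sq_nonneg _)]; try simp only [Pi.add_apply]
    have := trace_sq_le (A := G x * ((Fn n x)ᵀ * Fn n x) * G x - 1)
    simpa [hτs_def, hψ_def] using this
  have hφmem : MemLp φ 2 μ :=
    (memLp_two_iff_integrable_sq hφmeas.aestronglyMeasurable).mpr hφ2int
  have hψmem : ∀ n, MemLp (ψ n) 2 μ :=
    fun n => (memLp_two_iff_integrable_sq (hψmeas n).aestronglyMeasurable).mpr (hψ2int n)
  have hτmem : MemLp τ 2 μ :=
    (memLp_two_iff_integrable_sq hτmeas.aestronglyMeasurable).mpr hτ2int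
  have hτsmem : ∀ n, MemLp (τs n) 2 μ :=
    fun n => (memLp_two_iff_integrable_sq (hτsmeas n).aestronglyMeasurable).mpr (hτs2int n)
  -- the key difference bound
  have hdiffb : ∀ n, ∀ᵐ x ∂μ,
      (ψ n x - φ x) ^ 2 ≤ 4 * C ^ 2 * (w n x) ^ 2 ∧
      (τs n x - τ x) ^ 2 ≤ 8 * C ^ 2 * (w n x) ^ 2 := by
    intro n
    filter_upwards [hpack] with x hx
    set A' := (Fn n x)ᵀ * Fn n x with hA'
    set B' := (F x)ᵀ * F x with hB'
    have hMsub : (G x * A' * G x - 1) - (G x * B' * G x - 1) = G x * (A' - B') * G x := by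
      rw [Matrix.mul_sub, Matrix.sub_mul]
      abel
    have hAB : A' - B' = (Fn n x)ᵀ * (Fn n x - F x) + (Fn n x - F x)ᵀ * F x := by
      rw [Matrix.mul_sub, Matrix.transpose_sub, Matrix.sub_mul]
      abel
    have hABb : frob (A' - B') ≤ w n x := by
      rw [hAB, hw_def]
      calc frob ((Fn n x)ᵀ * (Fn n x - F x) + (Fn n x - F x)ᵀ * F x)
          ≤ frob ((Fn n x)ᵀ * (Fn n x - F x)) + frob ((Fn n x - F x)ᵀ * F x) :=
            frob_add_le _ _
        _ ≤ frob (Fn n x)ᵀ * frob (Fn n x - F x) + frob (Fn n x - F x)ᵀ * frob (F x) :=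
            add_le_add (frob_mul_le _ _) (frob_mul_le _ _)
        _ = (frob (Fn n x) + frob (F x)) * frob (Fn n x - F x) := by
            rw [frob_transpose, frob_transpose]; ring
    have hMb : frob ((G x * A' * G x - 1) - (G x * B' * G x - 1)) ≤ 2 * C * w n x := by
      rw [hMsub]
      calc frob (G x * (A' - B') * G x) ≤ 2 * C * frob (A' - B') := frob_conj_le hx.1
        _ ≤ 2 * C * w n x := by
            have h2C : (0:ℝ) ≤ 2 * C := by linarith
            exact mul_le_mul_of_nonneg_left hABb h2C
    have hw0 : 0 ≤ w n x := by
      rw [hw_def]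
      exact mul_nonneg (add_nonneg (frob_nonneg _) (frob_nonneg _)) (frob_nonneg _)
    constructor
    · have h1 : |ψ n x - φ x| ≤ 2 * C * w n x := by
        rw [hψ_def, hφ_def]
        exact le_trans (frob_sub_frob_le _ _) hMb
      nlinarith [sq_abs (ψ n x - φ x), abs_nonneg (ψ n x - φ x), h1,
        mul_nonneg (mul_nonneg (by linarith : (0:ℝ) ≤ 2 * C) hw0) hw0]
    · have h2 : τs n x - τ x = Matrix.trace ((G x * A' * G x - 1) - (G x * B' * G x - 1)) := by
        rw [hτs_def, hτ_def]
        dsimp only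
        simp only [Matrix.trace_sub]
        rfl
      have h3 : (τs n x - τ x) ^ 2 ≤
          2 * frob ((G x * A' * G x - 1) - (G x * B' * G x - 1)) ^ 2 := by
        rw [h2]; exact trace_sq_le
      have h4 : frob ((G x * A' * G x - 1) - (G x * B' * G x - 1)) ^ 2 ≤ (2 * C * w n x) ^ 2 := by
        have := frob_nonneg ((G x * A' * G x - 1) - (G x * B' * G x - 1))
        nlinarith [hMb]
      nlinarith [h3, h4]
  -- integrability of frob (Fn - F) ^ 4 and w ^ 2
  have hsub4 : ∀ n, Integrable (fun x => frob (Fn n x - F x) ^ 4) μ := by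
    intro n
    refine Integrable.mono' (((hFn4 n).const_mul 8).add (hF4.const_mul 8))
      (((hsubmeas n).pow_const 4).aestronglyMeasurable) ?_
    refine Eventually.of_forall fun x => ?_
    rw [Real.norm_eq_abs, abs_of_nonneg (pow_nonneg (frob_nonneg _) 4)]; try simp only [Pi.add_apply]
    have h1 : frob (Fn n x - F x) ≤ frob (Fn n x) + frob (F x) := frob_sub_le _ _
    have h2 : (frob (Fn n x) + frob (F x)) ^ 4 ≤ 8 * frob (Fn n x) ^ 4 + 8 * frob (F x) ^ 4 :=
      pow4_add_le (frob_nonneg _) (frob_nonneg _)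
    calc frob (Fn n x - F x) ^ 4 ≤ (frob (Fn n x) + frob (F x)) ^ 4 := by
          exact pow_le_pow_left₀ (frob_nonneg _) h1 4
      _ ≤ 8 * frob (Fn n x) ^ 4 + 8 * frob (F x) ^ 4 := h2
  have hw2int : ∀ n, Integrable (fun x => (w n x) ^ 2) μ := by
    intro n
    refine Integrable.mono' (((hsub4 n).const_mul 8).add (hF4.const_mul 128))
      (((hwmeas n).pow_const 2).aestronglyMeasurable) ?_
    refine Eventually.of_forall fun x => ?_
    rw [Real.norm_eq_abs, abs_of_nonneg (sq_nonneg _)]; try simp only [Pi.add_apply]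
    have hs : frob (Fn n x) ≤ frob (F x) + frob (Fn n x - F x) := by
      have h := frob_add_le (Fn n x - F x) (F x)
      rw [sub_add_cancel] at h
      linarith
    have h1 : frob (Fn n x) + frob (F x) ≤ frob (Fn n x - F x) + 2 * frob (F x) := by linarith
    have h2 : (w n x) ^ 2 ≤ (frob (Fn n x - F x) + 2 * frob (F x)) ^ 4 := by
      rw [hw_def]
      dsimp only
      have hsub0 := frob_nonneg (Fn n x - F x)
      have hF0 := frob_nonneg (F x)
      have hFn0 := frob_nonneg (Fn n x)
      have hb : frob (Fn n x - F x) ≤ frob (Fn n x - F x) + 2 * frob (F x) := by linarith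
      have hmul : (frob (Fn n x) + frob (F x)) * frob (Fn n x - F x) ≤
          (frob (Fn n x - F x) + 2 * frob (F x)) * (frob (Fn n x - F x) + 2 * frob (F x)) :=
        mul_le_mul h1 hb hsub0 (by linarith)
      calc ((frob (Fn n x) + frob (F x)) * frob (Fn n x - F x)) ^ 2
          ≤ ((frob (Fn n x - F x) + 2 * frob (F x)) * (frob (Fn n x - F x) + 2 * frob (F x))) ^ 2 :=
            pow_le_pow_left₀ (mul_nonneg (by linarith) hsub0) hmul 2
        _ = (frob (Fn n x - F x) + 2 * frob (F x)) ^ 4 := by ring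
    have h3 : (frob (Fn n x - F x) + 2 * frob (F x)) ^ 4 ≤
        8 * frob (Fn n x - F x) ^ 4 + 128 * frob (F x) ^ 4 := by
      have := pow4_add_le (b := 2 * frob (F x)) (frob_nonneg (Fn n x - F x))
        (mul_nonneg (by norm_num) (frob_nonneg (F x)))
      nlinarith [this]
    linarith
  -- Hölder: the master convergence ∫ w² → 0
  have hW : Tendsto (fun n => ∫ x, (w n x) ^ 2 ∂μ) atTop (𝓝 0) := by
    set e : ℕ → ℝ := fun n => ∫ x, frob (Fn n x - F x) ^ 4 ∂μ with he_def
    set A4 : ℝ := ∫ x, frob (F x) ^ 4 ∂μ with hA4_def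
    have he0 : ∀ n, 0 ≤ e n := fun n => integral_nonneg fun x => pow_nonneg (frob_nonneg _) 4
    have hA40 : 0 ≤ A4 := integral_nonneg fun x => pow_nonneg (frob_nonneg _) 4
    have hbnd : ∀ n, ∫ x, (w n x) ^ 2 ∂μ ≤
        Real.sqrt (e n) * Real.sqrt (8 * e n + 128 * A4) := by
      intro n
      have hconj : Real.HolderConjugate 2 2 := Real.HolderConjugate.two_two
      set u : Ω → ℝ := fun x => frob (Fn n x - F x) ^ 2 with hu_def
      set v : Ω → ℝ := fun x => (frob (Fn n x) + frob (F x)) ^ 2 with hv_def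
      have humeas : Measurable u := (hsubmeas n).pow_const 2
      have hvmeas : Measurable v := ((hFnnormmeas n).add hFnormmeas).pow_const 2
      have hu2int : Integrable (fun x => u x ^ 2) μ := by
        have hrw : (fun x => u x ^ 2) = fun x => frob (Fn n x - F x) ^ 4 := by
          funext x; rw [hu_def]; ring
        rw [hrw]; exact hsub4 n
      have hv2int : Integrable (fun x => v x ^ 2) μ := by
        refine Integrable.mono' (((hsub4 n).const_mul 8).add (hF4.const_mul 128))
          ((hvmeas.pow_const 2).aestronglyMeasurable) ?_
        refine Eventually.of_forall fun x => ?_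
        rw [Real.norm_eq_abs, abs_of_nonneg (sq_nonneg _)]; try simp only [Pi.add_apply]
        have hs : frob (Fn n x) ≤ frob (F x) + frob (Fn n x - F x) := by
          have h := frob_add_le (Fn n x - F x) (F x)
          rw [sub_add_cancel] at h
          linarith
        have h3 : (frob (Fn n x - F x) + 2 * frob (F x)) ^ 4 ≤
            8 * frob (Fn n x - F x) ^ 4 + 128 * frob (F x) ^ 4 := by
          have := pow4_add_le (b := 2 * frob (F x)) (frob_nonneg (Fn n x - F x))
            (mul_nonneg (by norm_num) (frob_nonneg (F x)))
          nlinarith [this]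
        have h4 : v x ^ 2 ≤ (frob (Fn n x - F x) + 2 * frob (F x)) ^ 4 := by
          rw [hv_def]
          dsimp only
          have h5 : frob (Fn n x) + frob (F x) ≤ frob (Fn n x - F x) + 2 * frob (F x) := by
            linarith
          have h6 : (0:ℝ) ≤ frob (Fn n x) + frob (F x) :=
            add_nonneg (frob_nonneg _) (frob_nonneg _)
          calc ((frob (Fn n x) + frob (F x)) ^ 2) ^ 2
              = (frob (Fn n x) + frob (F x)) ^ 4 := by ring
            _ ≤ (frob (Fn n x - F x) + 2 * frob (F x)) ^ 4 := pow_le_pow_left₀ h6 h5 4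
        linarith
      have humem : MemLp u (ENNReal.ofReal 2) μ := by
        have := (memLp_two_iff_integrable_sq humeas.aestronglyMeasurable).mpr hu2int
        simpa [ENNReal.ofReal_ofNat] using this
      have hvmem : MemLp v (ENNReal.ofReal 2) μ := by
        have := (memLp_two_iff_integrable_sq hvmeas.aestronglyMeasurable).mpr hv2int
        simpa [ENNReal.ofReal_ofNat] using this
      have holder := integral_mul_le_Lp_mul_Lq_of_nonneg hconj
        (f := u) (g := v)
        (Eventually.of_forall fun x => sq_nonneg _)
        (Eventually.of_forall fun x => sq_nonneg _) humem hvmem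
      have e1 : ∫ x, u x ^ (2:ℝ) ∂μ = e n := by
        refine integral_congr_ae (Eventually.of_forall fun x => ?_)
        simp only [hu_def, Real.rpow_two]
        ring
      have e2 : ∫ x, v x ^ (2:ℝ) ∂μ = ∫ x, v x ^ 2 ∂μ := by
        refine integral_congr_ae (Eventually.of_forall fun x => ?_)
        simp [Real.rpow_two]
      rw [e1, e2, sqrt_half_pow, sqrt_half_pow] at holder
      have hint_uv : ∫ x, (w n x) ^ 2 ∂μ = ∫ x, u x * v x ∂μ := by
        refine integral_congr_ae (Eventually.of_forall fun x => ?_)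
        rw [hw_def, hu_def, hv_def]
        dsimp only
        ring
      have hv2b : ∫ x, v x ^ 2 ∂μ ≤ 8 * e n + 128 * A4 := by
        have h1 : ∫ x, v x ^ 2 ∂μ ≤
            ∫ x, (8 * frob (Fn n x - F x) ^ 4 + 128 * frob (F x) ^ 4) ∂μ := by
          refine integral_mono hv2int (((hsub4 n).const_mul 8).add (hF4.const_mul 128)) ?_
          intro x
          dsimp only
          have hs : frob (Fn n x) ≤ frob (F x) + frob (Fn n x - F x) := by
            have h := frob_add_le (Fn n x - F x) (F x)
            rw [sub_add_cancel] at h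
            linarith
          have h3 : (frob (Fn n x - F x) + 2 * frob (F x)) ^ 4 ≤
              8 * frob (Fn n x - F x) ^ 4 + 128 * frob (F x) ^ 4 := by
            have := pow4_add_le (b := 2 * frob (F x)) (frob_nonneg (Fn n x - F x))
              (mul_nonneg (by norm_num) (frob_nonneg (F x)))
            nlinarith [this]
          have h6 : (0:ℝ) ≤ frob (Fn n x) + frob (F x) :=
            add_nonneg (frob_nonneg _) (frob_nonneg _)
          have h5 : frob (Fn n x) + frob (F x) ≤ frob (Fn n x - F x) + 2 * frob (F x) := by
            linarith
          calc v x ^ 2 = (frob (Fn n x) + frob (F x)) ^ 4 := by rw [hv_def]; ring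
            _ ≤ (frob (Fn n x - F x) + 2 * frob (F x)) ^ 4 := pow_le_pow_left₀ h6 h5 4
            _ ≤ 8 * frob (Fn n x - F x) ^ 4 + 128 * frob (F x) ^ 4 := h3
        calc ∫ x, v x ^ 2 ∂μ ≤
            ∫ x, (8 * frob (Fn n x - F x) ^ 4 + 128 * frob (F x) ^ 4) ∂μ := h1
          _ = 8 * e n + 128 * A4 := by
              rw [integral_add ((hsub4 n).const_mul 8) (hF4.const_mul 128),
                integral_const_mul, integral_const_mul]
      calc ∫ x, (w n x) ^ 2 ∂μ = ∫ x, u x * v x ∂μ := hint_uv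
        _ ≤ Real.sqrt (e n) * Real.sqrt (∫ x, v x ^ 2 ∂μ) := holder
        _ ≤ Real.sqrt (e n) * Real.sqrt (8 * e n + 128 * A4) :=
            mul_le_mul_of_nonneg_left (Real.sqrt_le_sqrt hv2b) (Real.sqrt_nonneg _)
    have hbnd0 : Tendsto (fun n => Real.sqrt (e n) * Real.sqrt (8 * e n + 128 * A4))
        atTop (𝓝 0) := by
      have h1 : Tendsto (fun n => Real.sqrt (e n)) atTop (𝓝 0) := by
        have := (Real.continuous_sqrt.tendsto 0).comp hconv
        simpa [he_def, Function.comp_def] using this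
      have h2 : Tendsto (fun n => Real.sqrt (8 * e n + 128 * A4)) atTop
          (𝓝 (Real.sqrt (128 * A4))) := by
        have h3 : Tendsto (fun n => 8 * e n + 128 * A4) atTop (𝓝 (128 * A4)) := by
          have := (hconv.const_mul 8).add_const (128 * A4)
          simpa [he_def] using this
        exact (Real.continuous_sqrt.tendsto _).comp h3
      have := h1.mul h2
      simpa using this
    exact squeeze_zero (fun n => integral_nonneg fun x => sq_nonneg _) hbnd hbnd0
  -- convergence of the two L² distances
  have hd1 : Tendsto (fun n => ∫ x, (ψ n x - φ x) ^ 2 ∂μ) atTop (𝓝 0) := by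
    refine squeeze_zero (fun n => integral_nonneg fun x => sq_nonneg _)
      (fun n => ?_) (by simpa using hW.const_mul (4 * C ^ 2))
    have h1 : ∫ x, (ψ n x - φ x) ^ 2 ∂μ ≤ ∫ x, 4 * C ^ 2 * (w n x) ^ 2 ∂μ := by
      refine integral_mono_ae ((hψmem n).sub hφmem).integrable_sq
        ((hw2int n).const_mul (4 * C ^ 2)) ?_
      filter_upwards [hdiffb n] with x hx
      exact hx.1
    calc ∫ x, (ψ n x - φ x) ^ 2 ∂μ ≤ ∫ x, 4 * C ^ 2 * (w n x) ^ 2 ∂μ := h1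
      _ = 4 * C ^ 2 * ∫ x, (w n x) ^ 2 ∂μ := integral_const_mul _ _
  have hd2 : Tendsto (fun n => ∫ x, (τs n x - τ x) ^ 2 ∂μ) atTop (𝓝 0) := by
    refine squeeze_zero (fun n => integral_nonneg fun x => sq_nonneg _)
      (fun n => ?_) (by simpa using hW.const_mul (8 * C ^ 2))
    have h1 : ∫ x, (τs n x - τ x) ^ 2 ∂μ ≤ ∫ x, 8 * C ^ 2 * (w n x) ^ 2 ∂μ := by
      refine integral_mono_ae ((hτsmem n).sub hτmem).integrable_sq
        ((hw2int n).const_mul (8 * C ^ 2)) ?_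
      filter_upwards [hdiffb n] with x hx
      exact hx.2
    calc ∫ x, (τs n x - τ x) ^ 2 ∂μ ≤ ∫ x, 8 * C ^ 2 * (w n x) ^ 2 ∂μ := h1
      _ = 8 * C ^ 2 * ∫ x, (w n x) ^ 2 ∂μ := integral_const_mul _ _
  have htend1 := key μ φ ψ hφmem hψmem hd1
  have htend2 := key μ τ τs hτmem hτsmem hd2
  -- rewrite the goal integrals
  have hLF : ∫ x, frob (ginvSqrt x * ((F x)ᵀ * F x - g x) * ginvSqrt x) ^ 2 ∂μ =
      ∫ x, φ x ^ 2 ∂μ := by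
    refine integral_congr_ae ?_
    filter_upwards [hpack] with x hx
    rw [hx.2 (F x)]
  have hL : (fun n => ∫ x, frob (ginvSqrt x * ((Fn n x)ᵀ * Fn n x - g x) * ginvSqrt x) ^ 2 ∂μ) =
      fun n => ∫ x, ψ n x ^ 2 ∂μ := by
    funext n
    refine integral_congr_ae ?_
    filter_upwards [hpack] with x hx
    rw [hx.2 (Fn n x)]
  have hTF : ∫ x, (trace (ginvSqrt x * ((F x)ᵀ * F x - g x) * ginvSqrt x)) ^ 2 ∂μ =
      ∫ x, τ x ^ 2 ∂μ := by
    refine integral_congr_ae ?_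
    filter_upwards [hpack] with x hx
    rw [hx.2 (F x)]
  have hT : (fun n =>
      ∫ x, (trace (ginvSqrt x * ((Fn n x)ᵀ * Fn n x - g x) * ginvSqrt x)) ^ 2 ∂μ) =
      fun n => ∫ x, τs n x ^ 2 ∂μ := by
    funext n
    refine integral_congr_ae ?_
    filter_upwards [hpack] with x hx
    rw [hx.2 (Fn n x)]
  constructor
  · rw [hLF, hL, htend1.liminf_eq]
  · rw [hTF, hT, htend2.liminf_eq]
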